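/- There is a constant C' ≥ 1, depending only on n, the doubling constant C_d, and the constant C in the comparability hypothesis between d and μ, such that for every x ∈ ℝⁿ and every r > 0 there exists a positive real number τ (depending on x and r) with B^d(x, τ r) ⊆ B(x, r) ⊆ B^d(x, C' τ r). -/

import Mathlib

open MeasureTheory Metric Filter
open scoped Topology ENNReal

/-- Comparison of Euclidean balls with metric balls (Lemma 6.6, second part): there is
`C' ≥ 1` depending only on `n`, `C_d` and `C` such that for every `x` and `r > 0` there
is `τ > 0` with `B^d(x, τ r) ⊆ B(x, r) ⊆ B^d(x, C' τ r)`. -/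
theorem euclidean_ball_between_metric_balls
    (n : ℕ) (hn : 2 ≤ n)
    (ω : EuclideanSpace ℝ (Fin n) → ℝ) (hω : ∀ x, 0 < ω x)
    (hωloc : LocallyIntegrable ω volume)
    (μ : Measure (EuclideanSpace ℝ (Fin n)))
    (hμ : μ = volume.withDensity fun x => ENNReal.ofReal (ω x))
    (Cd : ℝ) (hCd : 1 ≤ Cd)
    (hdoub : ∀ (x : EuclideanSpace ℝ (Fin n)) (r : ℝ), 0 < r →
      μ (ball x (2 * r)) ≤ ENNReal.ofReal Cd * μ (ball x r))
    (hpos : ∀ (x : EuclideanSpace ℝ (Fin n)) (r : ℝ), 0 < r → 0 < μ (ball x r))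
    (hfin : ∀ (x : EuclideanSpace ℝ (Fin n)) (r : ℝ), 0 < r → μ (ball x r) < ⊤)
    (d : EuclideanSpace ℝ (Fin n) → EuclideanSpace ℝ (Fin n) → ℝ)
    (hd_self : ∀ x, d x x = 0)
    (hd_pos : ∀ x y, x ≠ y → 0 < d x y)
    (hd_symm : ∀ x y, d x y = d y x)
    (hd_tri : ∀ x y z, d x z ≤ d x y + d y z)
    (hd_top : ∀ (x : EuclideanSpace ℝ (Fin n)), ∀ ε : ℝ, 0 < ε →
      (∃ δ > 0, ∀ y, dist x y < δ → d x y < ε) ∧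
      (∃ δ > 0, ∀ y, d x y < δ → dist x y < ε))
    (C : ℝ) (hC : 1 ≤ C)
    (hcomp : ∀ x y : EuclideanSpace ℝ (Fin n),
      C⁻¹ * (μ (ball x (dist x y))).toReal ≤ d x y ^ n ∧
      d x y ^ n ≤ C * (μ (ball x (dist x y))).toReal) :
    ∃ C' : ℝ, 1 ≤ C' ∧ ∀ (x : EuclideanSpace ℝ (Fin n)) (r : ℝ), 0 < r →
      ∃ τ : ℝ, 0 < τ ∧
        {y | d x y < τ * r} ⊆ ball x r ∧
        ball x r ⊆ {y | d x y < C' * τ * r} := by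
  have hC0 : (0:ℝ) < C := lt_of_lt_of_le one_pos hC
  refine ⟨2 * C ^ 2, by nlinarith, ?_⟩
  intro x r hr
  have hm : 0 < (μ (ball x r)).toReal :=
    ENNReal.toReal_pos (hpos x r hr).ne' (hfin x r hr).ne
  set m := (μ (ball x r)).toReal with hm_def
  set t := (C⁻¹ * m) ^ ((n:ℝ)⁻¹) with ht_def
  have ht : 0 < t := Real.rpow_pos_of_pos (by positivity) _
  have htn : t ^ n = C⁻¹ * m :=
    Real.rpow_inv_natCast_pow (by positivity) (by omega)
  have hdnn : ∀ y, 0 ≤ d x y := by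
    intro y
    have h1 := hd_tri x y x
    rw [hd_self, hd_symm y x] at h1
    linarith
  refine ⟨t / r, by positivity, ?_, ?_⟩
  · intro y hy
    simp only [Set.mem_setOf_eq] at hy
    rw [div_mul_cancel₀ _ hr.ne'] at hy
    rw [mem_ball, dist_comm]
    by_contra hle
    push_neg at hle
    have hxy : 0 < dist x y := hr.trans_le hle
    have hsub : ball x r ⊆ ball x (dist x y) := ball_subset_ball hle
    have hmono : m ≤ (μ (ball x (dist x y))).toReal :=
      ENNReal.toReal_mono (hfin x _ hxy).ne (measure_mono hsub)
    have h1 := (hcomp x y).1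
    have h2 : d x y ^ n < t ^ n := pow_lt_pow_left₀ hy (hdnn y) (by omega)
    rw [htn] at h2
    have h3 : C⁻¹ * m ≤ C⁻¹ * (μ (ball x (dist x y))).toReal :=
      mul_le_mul_of_nonneg_left hmono (by positivity)
    linarith
  · intro y hy
    simp only [Set.mem_setOf_eq]
    rw [mul_assoc, div_mul_cancel₀ _ hr.ne']
    rcases eq_or_ne x y with h | h
    · rw [← h, hd_self]; positivity
    have hxy : 0 < dist x y := dist_pos.2 h
    have hdr : dist x y ≤ r := by
      rw [mem_ball] at hy; rw [dist_comm]; exact hy.le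
    have hmono : (μ (ball x (dist x y))).toReal ≤ m :=
      ENNReal.toReal_mono (hfin x r hr).ne (measure_mono (ball_subset_ball hdr))
    have h2 := (hcomp x y).2
    have key : d x y ^ n < (2 * C ^ 2 * t) ^ n := by
      rw [mul_pow, htn]
      have h4 : (2 * C ^ 2) ≤ (2 * C ^ 2) ^ n :=
        le_self_pow₀ (by nlinarith) (by omega)
      have hCm : 0 < C⁻¹ * m := by positivity
      have h5 : C * m < 2 * C ^ 2 * (C⁻¹ * m) := by
        have : C ^ 2 * (C⁻¹ * m) = C * m := by field_simp
        nlinarith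
      have h6 : 2 * C ^ 2 * (C⁻¹ * m) ≤ (2 * C ^ 2) ^ n * (C⁻¹ * m) :=
        mul_le_mul_of_nonneg_right h4 hCm.le
      have h7 : C * (μ (ball x (dist x y))).toReal ≤ C * m :=
        mul_le_mul_of_nonneg_left hmono hC0.le
      linarith
    exact lt_of_pow_lt_pow_left₀ n (by positivity) key
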